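/- Let D(n) = ∑_{k=0}^{n} C(n, k) · C(n+k, k) be the n-th central Delannoy number (D(0)=1, D(1)=3, D(2)=13, D(3)=63, D(4)=321, …), and let D = ∑_{n≥0} D(n)·X^n ∈ ℤ⟦X⟧. Then D² · (1 − 6X + X²) = 1 in ℤ⟦X⟧; equivalently, the generating function of the central Delannoy numbers is 1/√(1 − 6z + z²). -/

import Mathlib

open Nat Finset

lemma chooseQ (a b c : ℕ) (h : a + b = c) :
    ((c.choose b : ℕ) : ℚ) = c ! / (a ! * b !) := by
  subst h
  rw [eq_div_iff (by positivity)]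
  push_cast [← Nat.add_choose_mul_factorial_mul_factorial a b]
  ring

lemma key1 (m k : ℕ) : (((m:ℚ)+k+1)+2) * ((m+k+1+2).choose (k+1)) * ((m+k+1+2+(k+1)).choose (k+1))
      + (((m:ℚ)+k+1)+1) * ((m+k+1).choose (k+1)) * ((m+k+1+(k+1)).choose (k+1))
      + (4*((m:ℚ)+k+1)+6) * ((m+k+1+1).choose (k+1)) * ((m+k+1+1+(k+1)).choose (k+1))
    = (6*((m:ℚ)+k+1)+9) * ((m+k+1+1).choose (k+1)) * ((m+k+1+1+(k+1)).choose (k+1))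
      + (4*((m:ℚ)+k+1)+6) * ((m+k+1+1).choose k) * ((m+k+1+1+k).choose k) := by
  rw [show m+k+1+2 = m+k+3 from by omega, show m+k+3+(k+1) = m+2*k+4 from by omega,
      show m+k+1+(k+1) = m+2*k+2 from by omega, show m+k+1+1 = m+k+2 from by omega,
      show m+k+2+(k+1) = m+2*k+3 from by omega, show m+k+2+k = m+2*k+2 from by omega]
  rw [chooseQ (m+2) (k+1) (m+k+3) (by omega), chooseQ (m+k+3) (k+1) (m+2*k+4) (by omega),
      chooseQ m (k+1) (m+k+1) (by omega), chooseQ (m+k+1) (k+1) (m+2*k+2) (by omega),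
      chooseQ (m+1) (k+1) (m+k+2) (by omega), chooseQ (m+k+2) (k+1) (m+2*k+3) (by omega),
      chooseQ (m+2) k (m+k+2) (by omega), chooseQ (m+k+2) k (m+2*k+2) (by omega)]
  have h1 : (((m+1)! : ℕ) : ℚ) = ((m:ℚ)+1) * (m ! : ℕ) := by
    rw [Nat.factorial_succ]; push_cast; ring
  have h2 : (((m+2)! : ℕ) : ℚ) = ((m:ℚ)+2) * ((m:ℚ)+1) * (m ! : ℕ) := by
    rw [show m+2 = m+1+1 from by omega, Nat.factorial_succ, Nat.factorial_succ]; push_cast; ring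
  have h3 : (((k+1)! : ℕ) : ℚ) = ((k:ℚ)+1) * (k ! : ℕ) := by
    rw [Nat.factorial_succ]; push_cast; ring
  have h4 : (((m+k+2)! : ℕ) : ℚ) = ((m:ℚ)+k+2) * ((m+k+1)! : ℕ) := by
    rw [show m+k+2 = m+k+1+1 from by omega, Nat.factorial_succ]; push_cast; ring
  have h5 : (((m+k+3)! : ℕ) : ℚ) = ((m:ℚ)+k+3) * ((m:ℚ)+k+2) * ((m+k+1)! : ℕ) := by
    rw [show m+k+3 = m+k+1+1+1 from by omega, Nat.factorial_succ, Nat.factorial_succ]; push_cast; ring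
  have h6 : (((m+2*k+3)! : ℕ) : ℚ) = ((m:ℚ)+2*k+3) * ((m+2*k+2)! : ℕ) := by
    rw [show m+2*k+3 = m+2*k+2+1 from by omega, Nat.factorial_succ]; push_cast; ring
  have h7 : (((m+2*k+4)! : ℕ) : ℚ) = ((m:ℚ)+2*k+4) * ((m:ℚ)+2*k+3) * ((m+2*k+2)! : ℕ) := by
    rw [show m+2*k+4 = m+2*k+2+1+1 from by omega, Nat.factorial_succ, Nat.factorial_succ]; push_cast; ring
  rw [h1, h2, h3, h4, h5, h6, h7]
  have A : ((m ! : ℕ) : ℚ) ≠ 0 := by positivity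
  have B : ((k ! : ℕ) : ℚ) ≠ 0 := by positivity
  have P : (((m+k+1)! : ℕ) : ℚ) ≠ 0 := by positivity
  have Q : (((m+2*k+2)! : ℕ) : ℚ) ≠ 0 := by positivity
  field_simp
  ring

lemma key (n k : ℕ) :
    ((n:ℚ)+2) * ((n+2).choose (k+1)) * ((n+2+(k+1)).choose (k+1))
      + ((n:ℚ)+1) * (n.choose (k+1)) * ((n+(k+1)).choose (k+1))
      + (4*(n:ℚ)+6) * ((n+1).choose (k+1)) * ((n+1+(k+1)).choose (k+1))
    = (6*(n:ℚ)+9) * ((n+1).choose (k+1)) * ((n+1+(k+1)).choose (k+1))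
      + (4*(n:ℚ)+6) * ((n+1).choose k) * ((n+1+k).choose k) := by
  rcases lt_trichotomy k n with h | rfl | h
  · obtain ⟨m, rfl⟩ : ∃ m, n = m + k + 1 := ⟨n - k - 1, by omega⟩
    push_cast
    linear_combination key1 m k
  · rw [Nat.choose_eq_zero_of_lt (show k < k+1 by omega)]
    rw [show k+2+(k+1) = 2*k+3 from by omega, show k+1+(k+1) = 2*k+2 from by omega,
        show k+1+k = 2*k+1 from by omega]
    rw [chooseQ 1 (k+1) (k+2) (by omega), chooseQ (k+2) (k+1) (2*k+3) (by omega),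
        chooseQ 0 (k+1) (k+1) (by omega), chooseQ (k+1) (k+1) (2*k+2) (by omega),
        chooseQ 1 k (k+1) (by omega), chooseQ (k+1) k (2*k+1) (by omega)]
    have h1 : (((k+1)! : ℕ) : ℚ) = ((k:ℚ)+1) * (k ! : ℕ) := by
      rw [Nat.factorial_succ]; push_cast; ring
    have h2 : (((k+2)! : ℕ) : ℚ) = ((k:ℚ)+2) * ((k:ℚ)+1) * (k ! : ℕ) := by
      rw [show k+2 = k+1+1 from by omega, Nat.factorial_succ, Nat.factorial_succ]; push_cast; ring
    have h3 : (((2*k+2)! : ℕ) : ℚ) = (2*(k:ℚ)+2) * ((2*k+1)! : ℕ) := by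
      rw [show 2*k+2 = 2*k+1+1 from by omega, Nat.factorial_succ]; push_cast; ring
    have h4 : (((2*k+3)! : ℕ) : ℚ) = (2*(k:ℚ)+3) * (2*(k:ℚ)+2) * ((2*k+1)! : ℕ) := by
      rw [show 2*k+3 = 2*k+1+1+1 from by omega, Nat.factorial_succ, Nat.factorial_succ]
      push_cast; ring
    rw [h1, h2, h3, h4]
    have A : ((k ! : ℕ) : ℚ) ≠ 0 := by positivity
    have P : (((2*k+1)! : ℕ) : ℚ) ≠ 0 := by positivity
    simp only [Nat.factorial_zero, Nat.factorial_one]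
    field_simp
    ring
  · rcases eq_or_lt_of_le (Nat.succ_le_of_lt h) with rfl | h2
    · rw [Nat.choose_self, Nat.choose_eq_zero_of_lt (show n < n+1+1 by omega),
          Nat.choose_eq_zero_of_lt (show n+1 < n+1+1 by omega), Nat.choose_self]
      rw [show n+2+(n+1+1) = 2*n+4 from by omega, show n+1+(n+1) = 2*n+2 from by omega]
      rw [chooseQ (n+2) (n+2) (2*n+4) (by omega), chooseQ (n+1) (n+1) (2*n+2) (by omega)]
      have h1 : (((n+2)! : ℕ) : ℚ) = ((n:ℚ)+2) * ((n+1)! : ℕ) := by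
        rw [show n+2 = n+1+1 from by omega, Nat.factorial_succ]; push_cast; ring
      have h2 : (((2*n+4)! : ℕ) : ℚ) = (2*(n:ℚ)+4) * (2*(n:ℚ)+3) * ((2*n+2)! : ℕ) := by
        rw [show 2*n+4 = 2*n+2+1+1 from by omega, Nat.factorial_succ, Nat.factorial_succ]
        push_cast; ring
      rw [h1, h2]
      have A : (((n+1)! : ℕ) : ℚ) ≠ 0 := by positivity
      have P : (((2*n+2)! : ℕ) : ℚ) ≠ 0 := by positivity
      field_simp
      ring
    · rw [Nat.choose_eq_zero_of_lt (show n+2 < k+1 by omega),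
          Nat.choose_eq_zero_of_lt (show n < k+1 by omega),
          Nat.choose_eq_zero_of_lt (show n+1 < k+1 by omega),
          Nat.choose_eq_zero_of_lt (show n+1 < k by omega)]
      push_cast
      ring

/-- `Fq n k = C(n,k)·C(n+k,k)` over `ℚ`. -/
noncomputable def Fq (n k : ℕ) : ℚ := ((n.choose k : ℕ) : ℚ) * (((n+k).choose k : ℕ) : ℚ)

/-- certificate -/
noncomputable def gq (n k : ℕ) : ℚ :=
  (4*(n:ℚ)+6) * (((n+1).choose k : ℕ) : ℚ) * (((n+1+k).choose k : ℕ) : ℚ)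

lemma key' (n k : ℕ) :
    ((n:ℚ)+2) * Fq (n+2) (k+1) - (6*(n:ℚ)+9) * Fq (n+1) (k+1) + ((n:ℚ)+1) * Fq n (k+1)
      = gq n k - gq n (k+1) := by
  simp only [Fq, gq]
  linear_combination key n k

lemma recQ (n : ℕ) :
    ((n:ℚ)+2) * (∑ k ∈ Finset.range (n+2+1), Fq (n+2) k)
      = (6*(n:ℚ)+9) * (∑ k ∈ Finset.range (n+1+1), Fq (n+1) k)
        - ((n:ℚ)+1) * (∑ k ∈ Finset.range (n+1), Fq n k) := by
  have tele : ∑ k ∈ Finset.range (n+2), (gq n k - gq n (k+1)) = gq n 0 - gq n (n+2) :=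
    Finset.sum_range_sub' (gq n) (n+2)
  have main : ∑ k ∈ Finset.range (n+3),
      (((n:ℚ)+2) * Fq (n+2) k - (6*(n:ℚ)+9) * Fq (n+1) k + ((n:ℚ)+1) * Fq n k) = 0 := by
    rw [Finset.sum_range_succ']
    rw [Finset.sum_congr rfl (fun k _ => key' n k), tele]
    have hz : gq n (n+2) = 0 := by
      simp [gq, Nat.choose_eq_zero_of_lt (show n+1 < n+2 by omega)]
    simp [hz, Fq, gq]
    ring
  have x1 : ∑ k ∈ Finset.range (n+3), Fq (n+1) k = ∑ k ∈ Finset.range (n+1+1), Fq (n+1) k := by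
    rw [show n+3 = (n+1+1)+1 from rfl, Finset.sum_range_succ]
    simp [Fq, Nat.choose_eq_zero_of_lt (show n+1 < n+2 by omega)]
  have x2 : ∑ k ∈ Finset.range (n+3), Fq n k = ∑ k ∈ Finset.range (n+1), Fq n k := by
    rw [show n+3 = (n+1)+1+1 from rfl, Finset.sum_range_succ, Finset.sum_range_succ]
    simp [Fq, Nat.choose_eq_zero_of_lt (show n < n+1 by omega),
      Nat.choose_eq_zero_of_lt (show n < n+2 by omega)]
  simp only [Finset.sum_add_distrib, Finset.sum_sub_distrib, ← Finset.mul_sum] at main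
  rw [x1, x2] at main
  linarith [main]

open PowerSeries

/-- The generating function `D` of the central Delannoy numbers
`D(n) = ∑_{k≤n} C(n,k)·C(n+k,k)` satisfies `D² · (1 - 6X + X²) = 1`, i.e. it equals
`1/√(1 - 6z + z²)`. -/
theorem stmt13 (D : ℕ → ℤ)
    (hD : ∀ n : ℕ, D n = ∑ k ∈ Finset.range (n + 1), (n.choose k : ℤ) * ((n + k).choose k : ℤ)) :
    (PowerSeries.mk fun n => D n) ^ 2 *
      (1 - 6 * PowerSeries.X + PowerSeries.X ^ 2) = 1 := by
  set f : ℤ⟦X⟧ := PowerSeries.mk fun n => D n with hf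
  -- cast of D to ℚ
  have hDq : ∀ m : ℕ, ((D m : ℤ) : ℚ) = ∑ k ∈ Finset.range (m+1), Fq m k := by
    intro m
    rw [hD m]
    push_cast [Fq]
    rfl
  have hrec : ∀ n : ℕ, ((n:ℤ)+2) * D (n+2)
      = (6*(n:ℤ)+9) * D (n+1) - ((n:ℤ)+1) * D n := by
    intro n
    have h := recQ n
    rw [← hDq, ← hDq, ← hDq] at h
    exact_mod_cast h
  have hD0 : D 0 = 1 := by simp [hD]
  have hD1 : D 1 = 3 := by simp [hD, Finset.sum_range_succ]
  have hD2 : D 2 = 13 := by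
    rw [hD]
    simp [Finset.sum_range_succ]
    norm_num [Nat.choose]
  have h6 : ((6:ℤ⟦X⟧)) = C (6:ℤ) := (map_ofNat (C (R := ℤ)) 6).symm
  have h3 : ((3:ℤ⟦X⟧)) = C (3:ℤ) := (map_ofNat (C (R := ℤ)) 3).symm
  -- derivative of 1 - 6X + X²
  have hq : (d⁄dX ℤ) (1 - 6*X + X^2 : ℤ⟦X⟧) = 2*X - 6 := by
    rw [h6, pow_two]
    rw [map_add, map_sub, Derivation.leibniz, Derivation.leibniz, derivative_X, derivative_C,
      Derivation.map_one_eq_zero]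
    simp only [smul_eq_mul]
    rw [show (C (R := ℤ)) 6 = (6:ℤ⟦X⟧) from (map_ofNat (C (R := ℤ)) 6)]
    ring
  -- the ODE
  have hode : (d⁄dX ℤ) f * (1 - 6*X + X^2) = (3 - X) * f := by
    rw [show (d⁄dX ℤ) f * (1 - 6*X + X^2)
          = (d⁄dX ℤ) f - 6*(((d⁄dX ℤ) f)*X) + ((((d⁄dX ℤ) f)*X)*X) from by ring,
        show (3 - X) * f = 3*f - f*X from by ring, h6, h3]
    ext N
    rcases N with _ | N
    · simp only [map_add, map_sub, coeff_C_mul, coeff_zero_mul_X, coeff_derivative, hf, coeff_mk]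
      rw [hD0, hD1]
      norm_num
    rcases N with _ | N
    · simp only [map_add, map_sub, coeff_C_mul, coeff_succ_mul_X, coeff_zero_mul_X,
        coeff_derivative, hf, coeff_mk]
      rw [hD0, hD1, hD2]
      norm_num
    · simp only [map_add, map_sub, coeff_C_mul, coeff_succ_mul_X, coeff_derivative, hf, coeff_mk]
      have h := hrec (N+1)
      push_cast at h ⊢
      linear_combination h
  have hdg : (d⁄dX ℤ) (f^2 * (1 - 6*X + X^2)) = 0 := by
    rw [pow_two, Derivation.leibniz, Derivation.leibniz, hq]
    simp only [smul_eq_mul]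
    linear_combination (2*f) * hode
  ext N
  rcases N with _ | N
  · simp only [coeff_zero_eq_constantCoeff, map_mul, map_pow, map_sub, map_add, map_one,
      constantCoeff_X, hf, constantCoeff_mk]
    rw [hD0]
    norm_num
  · have h := congrArg (fun g => coeff N g) hdg
    simp only [coeff_derivative, map_zero] at h
    have hN : ((N:ℤ)+1) ≠ 0 := by exact_mod_cast Nat.succ_ne_zero N
    have : coeff (N+1) (f^2 * (1 - 6*X + X^2)) = 0 := by
      rcases mul_eq_zero.mp h with h' | h'
      · exact h'
      · exact absurd (by exact_mod_cast h') hN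
    rw [this, coeff_one]
    simp
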